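/- Let q ≥ 1, n ≥ 1, let G be a real q×n matrix, let X ⊆ ℝⁿ be a nonempty compact convex set, and define Γ(x) = (Gx, −eᵀGx), Y := {Gx : x ∈ X}, P := Γ[X] + ℝ₊^{q+1}, and H := {y ∈ ℝ^{q+1} : eᵀy = 0}. Let ε > 0 and let P_inner ⊆ ℝ^{q+1} satisfy P + {εe} ⊆ P_inner, P_inner ⊆ P, and P_inner = (P_inner ∩ H) + ℝ₊^{q+1}, and set Y_inner := π[P_inner ∩ H]. Then Y_inner ⊆ Y and d_H(Y_inner, Y) ≤ ε√(q² + q − 1). -/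

import Mathlib

noncomputable section
open Pointwise

def euc {m : ℕ} (x : Fin m → ℝ) : EuclideanSpace ℝ (Fin m) := WithLp.toLp 2 x

def Gam {q n : ℕ} (G : Matrix (Fin q) (Fin n) ℝ) (x : Fin n → ℝ) :
    EuclideanSpace ℝ (Fin (q + 1)) :=
  euc (Fin.snoc (G.mulVec x) (-(∑ j, G.mulVec x j)))

def orth (m : ℕ) : Set (EuclideanSpace ℝ (Fin m)) := {y | ∀ i, 0 ≤ y i}

def hyp (q : ℕ) : Set (EuclideanSpace ℝ (Fin (q + 1))) := {y | ∑ i, y i = 0}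

def proj {q : ℕ} (y : EuclideanSpace ℝ (Fin (q + 1))) : EuclideanSpace ℝ (Fin q) :=
  euc (fun i => y i.castSucc)

def phi {q : ℕ} (y ys : EuclideanSpace ℝ (Fin (q + 1))) : ℝ :=
  (∑ i : Fin q, y i.castSucc * ys i.castSucc) +
    y (Fin.last q) * (1 - ∑ i : Fin q, ys i.castSucc) - ys (Fin.last q)

lemma sum_Gam {q n : ℕ} (G : Matrix (Fin q) (Fin n) ℝ) (x : Fin n → ℝ) :
    ∑ i, Gam G x i = 0 := by
  simp [Gam, euc, Fin.sum_univ_castSucc]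

/-- error bound for (CPP) via the dual Benson algorithm. -/
theorem stmt_14 (q n : ℕ) (hq : 1 ≤ q) (hn : 1 ≤ n)
    (G : Matrix (Fin q) (Fin n) ℝ) (X : Set (Fin n → ℝ))
    (hX : X.Nonempty) (hXc : IsCompact X) (hXconv : Convex ℝ X)
    (ε : ℝ) (hε : 0 < ε)
    (Pinner : Set (EuclideanSpace ℝ (Fin (q + 1))))
    (h1 : ((Gam G '' X) + orth (q + 1)) + {euc fun _ => ε} ⊆ Pinner)
    (h2 : Pinner ⊆ (Gam G '' X) + orth (q + 1))
    (h3 : Pinner = (Pinner ∩ hyp q) + orth (q + 1)) :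
    proj '' (Pinner ∩ hyp q) ⊆ (fun x => euc (G.mulVec x)) '' X ∧
    Metric.hausdorffDist (proj '' (Pinner ∩ hyp q)) ((fun x => euc (G.mulVec x)) '' X)
      ≤ ε * Real.sqrt ((q : ℝ) ^ 2 + q - 1) := by
  have hq1 : (1 : ℝ) ≤ (q : ℝ) := by exact_mod_cast hq
  -- Part 1
  have hsub : proj '' (Pinner ∩ hyp q) ⊆ (fun x => euc (G.mulVec x)) '' X := by
    rintro _ ⟨y, ⟨hyP, hyH⟩, rfl⟩
    obtain ⟨a, ⟨x, hx, rfl⟩, c, hc, rfl⟩ := h2 hyP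
    have hz : ∑ i, c i = 0 := by
      have := hyH
      simp only [hyp, Set.mem_setOf_eq, PiLp.add_apply, Finset.sum_add_distrib,
        sum_Gam, zero_add] at this
      exact this
    have hc0 : ∀ i, c i = 0 := fun i =>
      (Finset.sum_eq_zero_iff_of_nonneg (fun i _ => hc i)).mp hz i (Finset.mem_univ i)
    refine ⟨x, hx, ?_⟩
    ext i
    show G.mulVec x i = (Gam G x + c) i.castSucc
    simp [Gam, euc, PiLp.add_apply, Fin.snoc_castSucc, hc0]
  refine ⟨hsub, Metric.hausdorffDist_le_of_infDist
      (mul_nonneg hε.le (Real.sqrt_nonneg _)) ?_ ?_⟩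
  · intro z hz
    rw [Metric.infDist_zero_of_mem (hsub hz)]
    exact mul_nonneg hε.le (Real.sqrt_nonneg _)
  · rintro _ ⟨x, hx, rfl⟩
    have hv : Gam G x + euc (fun _ => ε) ∈ Pinner := by
      apply h1
      have h0 : (0 : EuclideanSpace ℝ (Fin (q + 1))) ∈ orth (q + 1) := fun i => le_refl 0
      have := Set.add_mem_add (Set.add_mem_add (Set.mem_image_of_mem (Gam G) hx) h0)
        (Set.mem_singleton (euc fun _ => ε))
      simpa using this
    rw [h3] at hv
    obtain ⟨p, hp, c, hc, hpc⟩ := hv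
    refine le_trans (Metric.infDist_le_dist_of_mem (s := proj '' (Pinner ∩ hyp q)) (y := proj p) (Set.mem_image_of_mem proj hp)) ?_
    -- coordinatewise identity
    have hpi : ∀ i : Fin q, euc (G.mulVec x) i - proj p i = c i.castSucc - ε := by
      intro i
      have hcoord := congrArg (fun v : EuclideanSpace ℝ (Fin (q + 1)) => v i.castSucc) hpc
      simp only [PiLp.add_apply, Gam, euc, Fin.snoc_castSucc] at hcoord
      simp only [proj, euc]
      linarith
    -- sum of c
    have hsumc : ∑ i, c i = ((q : ℝ) + 1) * ε := by
      have hsum := congrArg (fun v : EuclideanSpace ℝ (Fin (q + 1)) => ∑ i, v i) hpc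
      have hpH : ∑ i, p i = 0 := hp.2
      simp only [PiLp.add_apply, Finset.sum_add_distrib, sum_Gam, hpH, zero_add, euc,
        Finset.sum_const, Finset.card_univ, Fintype.card_fin, nsmul_eq_mul] at hsum
      rw [hsum]; push_cast; ring
    set s : ℝ := ∑ i : Fin q, c i.castSucc with hs
    have hsplit : ∑ i, c i = s + c (Fin.last q) := by
      rw [Fin.sum_univ_castSucc]
    have hs0 : 0 ≤ s := Finset.sum_nonneg fun i _ => hc _
    have hsle : s ≤ ((q : ℝ) + 1) * ε := by
      have := hc (Fin.last q); linarith [hsumc, hsplit]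
    -- bound on sum of squares
    have hsq : ∑ i : Fin q, (c i.castSucc) ^ 2 ≤ s ^ 2 :=
      Finset.sum_sq_le_sq_sum_of_nonneg fun i _ => hc _
    have hexp : ∑ i : Fin q, (c i.castSucc - ε) ^ 2
        = (∑ i : Fin q, (c i.castSucc) ^ 2) - 2 * ε * s + (q : ℝ) * ε ^ 2 := by
      have : ∀ i : Fin q, (c i.castSucc - ε) ^ 2
          = (c i.castSucc) ^ 2 - 2 * ε * (c i.castSucc) + ε ^ 2 := fun i => by ring
      rw [Finset.sum_congr rfl fun i _ => this i]
      rw [Finset.sum_add_distrib, Finset.sum_sub_distrib, ← Finset.mul_sum]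
      simp [Finset.card_univ, nsmul_eq_mul, hs]
    have hkey : ∑ i : Fin q, (c i.castSucc - ε) ^ 2 ≤ ε ^ 2 * ((q : ℝ) ^ 2 + q - 1) := by
      have hprod : 0 ≤ (((q : ℝ) + 1) * ε - s) * (s + ((q : ℝ) - 1) * ε) :=
        mul_nonneg (by linarith) (by nlinarith)
      rw [hexp]; nlinarith
    rw [EuclideanSpace.dist_eq]
    have hdistpt : ∀ i : Fin q, dist (euc (G.mulVec x) i) (proj p i) ^ 2
        = (c i.castSucc - ε) ^ 2 := by
      intro i
      rw [Real.dist_eq, sq_abs, hpi i]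
    calc Real.sqrt (∑ i, dist (euc (G.mulVec x) i) (proj p i) ^ 2)
        = Real.sqrt (∑ i : Fin q, (c i.castSucc - ε) ^ 2) := by
          rw [Finset.sum_congr rfl fun i _ => hdistpt i]
      _ ≤ Real.sqrt (ε ^ 2 * ((q : ℝ) ^ 2 + q - 1)) := Real.sqrt_le_sqrt hkey
      _ = ε * Real.sqrt ((q : ℝ) ^ 2 + q - 1) := by
          rw [Real.sqrt_mul (sq_nonneg ε), Real.sqrt_sq hε.le]
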